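/- Let η be a positive integer coprime to p, s ≥ 1, λ_0 a nonzero element of F_q, and 0 ≤ i ≤ p^s − 1. Then the minimum distance of C_i(η, p^s, λ_0) equals min{V_t : i ≤ t ≤ p^s − 1}. -/

import Mathlib

open Polynomial

variable {F : Type} [Field F] [Fintype F] [DecidableEq F]

/-- `d` is the minimum distance (minimum Hamming weight of a nonzero codeword) of `Cset`. -/
def minDistIs {n : ℕ} (Cset : Set (Fin n → F)) (d : ℕ) : Prop :=
  IsLeast {w : ℕ | ∃ c ∈ Cset, c ≠ 0 ∧ hammingNorm c = w} d

/-- The `i`-th code symbol of `Cset` has locality `r`. -/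
def symbolLocality {n : ℕ} (Cset : Set (Fin n → F)) (i : Fin n) (r : ℕ) : Prop :=
  ∃ I : Finset (Fin n), i ∉ I ∧ I.card ≤ r ∧
    ∃ f : ({x : Fin n // x ∈ I} → F) → F, ∀ c ∈ Cset, c i = f (fun j => c j.1)

/-- `Cset` has all-symbol locality `r`. -/
def hasAllSymbolLocality {n : ℕ} (Cset : Set (Fin n → F)) (r : ℕ) : Prop :=
  ∀ i : Fin n, symbolLocality Cset i r

/-- `r` is the minimum locality of `Cset`. -/
def minLocalityIs {n : ℕ} (Cset : Set (Fin n → F)) (r : ℕ) : Prop :=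
  IsLeast {r' : ℕ | hasAllSymbolLocality Cset r'} r

/-- The λ-constacyclic code of length `n` corresponding to the ideal generated by (the image of)
`g` in `F[x]/⟨x^n − λ⟩`, viewed as a set of vectors via the coefficient identification. -/
def codeOfGen (n : ℕ) (lam : F) (g : F[X]) : Set (Fin n → F) :=
  {c | (∑ j : Fin n, Polynomial.C (c j) * X ^ (j : ℕ)) ∈ Ideal.span {g, X ^ n - Polynomial.C lam}}

/-- The code `C_i(η, p^s, λ₀)`: the λ-constacyclic code of length `η p^s`
generated by `(x^η − λ₀)^i`, where `λ = λ₀^{p^s}`. -/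
def Ci (p η s i : ℕ) (lam0 : F) : Set (Fin (η * p ^ s) → F) :=
  codeOfGen (η * p ^ s) (lam0 ^ p ^ s) ((X ^ η - Polynomial.C lam0) ^ i)

/-- The code `C_{i,j}(2p^s, λ₀)` with `λ₀ = δ²`: the λ-constacyclic code of length `2 p^s`
generated by `(x − δ)^i (x + δ)^j`, where `λ = λ₀^{p^s}`. -/
def Cij (p s i j : ℕ) (δ : F) : Set (Fin (2 * p ^ s) → F) :=
  codeOfGen (2 * p ^ s) ((δ ^ 2) ^ p ^ s) ((X - Polynomial.C δ) ^ i * (X + Polynomial.C δ) ^ j)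

/-- `V_t = Π_j (t_j + 1)` over the base-`p` digits `t_j` of `t`. -/
def Vdig (p t : ℕ) : ℕ := ((Nat.digits p t).map (· + 1)).prod

/-- Ceiling division `⌈a / b⌉` of natural numbers. -/
def nceil (a b : ℕ) : ℕ := (a + b - 1) / b

/-- `Cset` is an optimal LRC: for its dimension `k`, minimum distance `d` and minimum
locality `r`, the Singleton-like bound `d = n − k − ⌈k/r⌉ + 2` is met with equality. -/
def optimalLRC {n : ℕ} (Cset : Set (Fin n → F)) : Prop :=
  ∃ k d r : ℕ, Nat.card Cset = Fintype.card F ^ k ∧ minDistIs Cset d ∧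
    minLocalityIs Cset r ∧ (d : ℤ) = (n : ℤ) - (k : ℤ) - (nceil k r : ℤ) + 2

namespace MCJ

lemma Vdig_zero (p : ℕ) : Vdig p 0 = 1 := by simp [Vdig]

lemma Vdig_rec {p : ℕ} (hp : 2 ≤ p) {t : ℕ} (ht : t ≠ 0) :
    Vdig p t = (t % p + 1) * Vdig p (t / p) := by
  unfold Vdig
  rw [Nat.digits_def' hp (Nat.pos_of_ne_zero ht)]
  simp

lemma Vdig_mul_add {p : ℕ} (hp : 2 ≤ p) (a r : ℕ) (hr : r < p) :
    Vdig p (p * a + r) = (r + 1) * Vdig p a := by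
  rcases Nat.eq_zero_or_pos (p * a + r) with h | h
  · have ha : a = 0 := by
      rcases Nat.eq_zero_or_pos a with h' | h'
      · exact h'
      · exfalso; nlinarith
    have hr0 : r = 0 := by omega
    simp [ha, hr0, Vdig_zero]
  · rw [Vdig_rec hp (by omega)]
    congr 2
    · rw [Nat.mul_add_mod, Nat.mod_eq_of_lt hr]
    · rw [Nat.mul_add_div (by omega : 0 < p), Nat.div_eq_of_lt hr, add_zero]

lemma Vdig_mul {p : ℕ} (hp : 2 ≤ p) (a : ℕ) : Vdig p (p * a) = Vdig p a := by
  simpa using Vdig_mul_add hp a 0 (by omega)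

variable {F : Type} [Field F]

/-- The `j`-th `η`-section of a polynomial: `(sect η j c).coeff n = c.coeff (η*n+j)`. -/
noncomputable def sect (η j : ℕ) (c : F[X]) : F[X] :=
  ∑ n ∈ Finset.range (c.natDegree + 1), Polynomial.C (c.coeff (η * n + j)) * X ^ n

lemma coeff_sum_C_X (N : ℕ) (a : ℕ → F) (k : ℕ) :
    (∑ n ∈ Finset.range N, Polynomial.C (a n) * X ^ n).coeff k =
      if k < N then a k else 0 := by
  rw [finset_sum_coeff]
  have : ∀ n ∈ Finset.range N, (Polynomial.C (a n) * X ^ n).coeff k =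
      if k = n then a n else 0 := by
    intro n _
    rw [coeff_C_mul, coeff_X_pow]
    split_ifs <;> simp
  rw [Finset.sum_congr rfl this, Finset.sum_ite_eq]
  simp [Finset.mem_range]

lemma coeff_sect {η : ℕ} (hη : 0 < η) (j : ℕ) (c : F[X]) (n : ℕ) :
    (sect η j c).coeff n = c.coeff (η * n + j) := by
  rw [sect, coeff_sum_C_X]
  split_ifs with h
  · rfl
  · symm
    apply coeff_eq_zero_of_natDegree_lt
    have h1 : c.natDegree + 1 ≤ n := by omega
    have h2 : n ≤ η * n := Nat.le_mul_of_pos_left n hη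
    omega

/-- Block coefficient lemma. -/
lemma blockCoeff {η : ℕ} (hη : 0 < η) {f : F[X]} (hf : f.natDegree < η) (g : F[X])
    {j : ℕ} (hj : j < η) (n : ℕ) :
    (f * Polynomial.expand F η g).coeff (η * n + j) = f.coeff j * g.coeff n := by
  rw [coeff_mul]
  rw [Finset.sum_eq_single (j, η * n)]
  · rw [Polynomial.coeff_expand hη]
    simp [Nat.mul_div_cancel_left _ hη]
  · rintro ⟨a, b⟩ hab hne
    rw [Finset.HasAntidiagonal.mem_antidiagonal] at hab
    by_cases ha : η ≤ a
    · rw [coeff_eq_zero_of_natDegree_lt (lt_of_lt_of_le hf ha), zero_mul]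
    · push_neg at ha
      rw [Polynomial.coeff_expand hη]
      split_ifs with hdvd
      · exfalso
        obtain ⟨cdiv, rfl⟩ := hdvd
        have hmod : a % η = j % η := by
          have h1 : (a + η * cdiv) % η = a % η := by
            rw [Nat.add_mul_mod_self_left]
          have h2 : (η * n + j) % η = j % η := by
            rw [Nat.mul_add_mod]
          rw [← h1, hab, h2]
        have haj : a = j := by
          rwa [Nat.mod_eq_of_lt ha, Nat.mod_eq_of_lt hj] at hmod
        subst haj
        have : η * cdiv = η * n := by omega
        have hcn : cdiv = n := Nat.eq_of_mul_eq_mul_left hη this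
        exact hne (by rw [hcn])
      · rw [mul_zero]
  · intro h
    exact absurd (Finset.HasAntidiagonal.mem_antidiagonal.mpr (by ring)) h

lemma decomp {η : ℕ} (hη : 0 < η) (c : F[X]) :
    ∑ j ∈ Finset.range η, X ^ j * Polynomial.expand F η (sect η j c) = c := by
  ext M
  rw [finset_sum_coeff]
  have hM : η * (M / η) + M % η = M := Nat.div_add_mod M η
  have key : ∀ j ∈ Finset.range η,
      (X ^ j * Polynomial.expand F η (sect η j c)).coeff M =
        if M % η = j then c.coeff M else 0 := by
    intro j hj
    rw [Finset.mem_range] at hj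
    have h1 : (X ^ j * Polynomial.expand F η (sect η j c)).coeff M
        = (X ^ j).coeff (M % η) * (sect η j c).coeff (M / η) := by
      conv_lhs => rw [← hM]
      exact blockCoeff hη (by simpa [natDegree_X_pow] using hj) _ (Nat.mod_lt _ hη) _
    rw [h1, coeff_X_pow, coeff_sect hη]
    split_ifs with h
    · rw [one_mul, ← h, hM]
    · rw [zero_mul]
  rw [Finset.sum_congr rfl key, Finset.sum_ite_eq]
  simp [Finset.mem_range, Nat.mod_lt _ hη]

lemma sect_mul {η : ℕ} (hη : 0 < η) {j : ℕ} (hj : j < η) (g d : F[X]) :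
    sect η j (Polynomial.expand F η g * d) = g * sect η j d := by
  ext n
  rw [coeff_sect hη]
  conv_lhs => rw [← decomp hη d, Finset.mul_sum]
  rw [finset_sum_coeff]
  have key : ∀ j' ∈ Finset.range η,
      (Polynomial.expand F η g * (X ^ j' * Polynomial.expand F η (sect η j' d))).coeff (η * n + j)
        = if j = j' then (g * sect η j' d).coeff n else 0 := by
    intro j' hj'
    rw [Finset.mem_range] at hj'
    have hrw : Polynomial.expand F η g * (X ^ j' * Polynomial.expand F η (sect η j' d)) =
        X ^ j' * Polynomial.expand F η (g * sect η j' d) := by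
      rw [map_mul]; ring
    rw [hrw, blockCoeff hη (by simpa [natDegree_X_pow] using hj') _ hj, coeff_X_pow]
    split_ifs with h
    · rw [one_mul]
    · rw [zero_mul]
  rw [Finset.sum_congr rfl key, Finset.sum_ite_eq]
  simp [Finset.mem_range, hj]


lemma sum_card_sect_le {η : ℕ} (hη : 0 < η) (c : F[X]) (S : Finset ℕ)
    (hS : S ⊆ Finset.range η) :
    ∑ j ∈ S, (sect η j c).support.card ≤ c.support.card := by
  classical
  set img : ℕ → Finset ℕ := fun j => (sect η j c).support.image (fun n => η * n + j) with himg
  have hinj : ∀ j, Set.InjOn (fun n => η * n + j) ((sect η j c).support : Set ℕ) := by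
    intro j n1 _ n2 _ h
    simp only at h
    exact Nat.eq_of_mul_eq_mul_left hη (by omega)
  have hcard : ∀ j, (img j).card = (sect η j c).support.card := by
    intro j
    exact Finset.card_image_of_injOn (hinj j)
  have hsub : ∀ j ∈ S, img j ⊆ c.support := by
    intro j hj m hm
    simp only [himg, Finset.mem_image] at hm
    obtain ⟨n, hn, rfl⟩ := hm
    rw [mem_support_iff] at hn ⊢
    rwa [coeff_sect hη] at hn
  have hdisj : ∀ j1 ∈ S, ∀ j2 ∈ S, j1 ≠ j2 → Disjoint (img j1) (img j2) := by
    intro j1 hj1 j2 hj2 hne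
    rw [Finset.disjoint_left]
    intro m hm1 hm2
    simp only [himg, Finset.mem_image] at hm1 hm2
    obtain ⟨n1, _, h1⟩ := hm1
    obtain ⟨n2, _, h2⟩ := hm2
    have hj1' : j1 < η := Finset.mem_range.mp (hS hj1)
    have hj2' : j2 < η := Finset.mem_range.mp (hS hj2)
    apply hne
    have e1 : m % η = j1 := by rw [← h1, Nat.mul_add_mod, Nat.mod_eq_of_lt hj1']
    have e2 : m % η = j2 := by rw [← h2, Nat.mul_add_mod, Nat.mod_eq_of_lt hj2']
    omega
  calc ∑ j ∈ S, (sect η j c).support.card = ∑ j ∈ S, (img j).card := by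
        exact Finset.sum_congr rfl (fun j _ => (hcard j).symm)
    _ = (S.biUnion img).card := (Finset.card_biUnion hdisj).symm
    _ ≤ c.support.card := Finset.card_le_card (Finset.biUnion_subset.mpr hsub)

lemma card_sect_le {η : ℕ} (hη : 0 < η) (c : F[X]) {j : ℕ} (hj : j < η) :
    (sect η j c).support.card ≤ c.support.card := by
  have := sum_card_sect_le hη c {j} (by simp [Finset.singleton_subset_iff, Finset.mem_range, hj])
  simpa using this

lemma card_support_mul_expand {η : ℕ} (hη : 0 < η) {f : F[X]} (hf : f.natDegree < η)
    (g : F[X]) :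
    (f * Polynomial.expand F η g).support.card = f.support.card * g.support.card := by
  classical
  have hcoeff : ∀ M, (f * Polynomial.expand F η g).coeff M = f.coeff (M % η) * g.coeff (M / η) := by
    intro M
    have hM : η * (M / η) + M % η = M := Nat.div_add_mod M η
    conv_lhs => rw [← hM]
    exact blockCoeff hη hf _ (Nat.mod_lt _ hη) _
  have hsupp : (f * Polynomial.expand F η g).support
      = (f.support ×ˢ g.support).image (fun x => η * x.2 + x.1) := by
    ext M
    simp only [mem_support_iff, Finset.mem_image, Finset.mem_product]
    constructor
    · intro hM
      rw [hcoeff] at hM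
      refine ⟨(M % η, M / η), ⟨?_, ?_⟩, ?_⟩
      · intro h; rw [h, zero_mul] at hM; exact hM rfl
      · intro h; rw [h, mul_zero] at hM; exact hM rfl
      · exact Nat.div_add_mod M η
    · rintro ⟨⟨j, n⟩, ⟨hjf, hng⟩, rfl⟩
      have hjη : j < η := lt_of_le_of_lt (le_natDegree_of_ne_zero hjf) hf
      rw [hcoeff, Nat.mul_add_mod, Nat.mod_eq_of_lt hjη,
        Nat.mul_add_div hη, Nat.div_eq_of_lt hjη, add_zero]
      exact mul_ne_zero hjf hng
  rw [hsupp, Finset.card_image_of_injOn, Finset.card_product, mul_comm]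
  rintro ⟨j1, n1⟩ h1 ⟨j2, n2⟩ h2 h
  simp only [Finset.mem_coe, Finset.mem_product, mem_support_iff] at h1 h2
  simp only at h
  have hj1 : j1 < η := lt_of_le_of_lt (le_natDegree_of_ne_zero h1.1) hf
  have hj2 : j2 < η := lt_of_le_of_lt (le_natDegree_of_ne_zero h2.1) hf
  have e1 : (η * n1 + j1) % η = j1 := by rw [Nat.mul_add_mod, Nat.mod_eq_of_lt hj1]
  have e2 : (η * n2 + j2) % η = j2 := by rw [Nat.mul_add_mod, Nat.mod_eq_of_lt hj2]
  have : j1 = j2 := by rw [← e1, ← e2, h]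
  subst this
  have : n1 = n2 := Nat.eq_of_mul_eq_mul_left hη (by omega)
  simp [this]

lemma support_pow_small {p : ℕ} (hp : p.Prime) [CharP F p] {lam : F} (hlam : lam ≠ 0)
    {r : ℕ} (hr : r < p) :
    ((X - Polynomial.C lam) ^ r).support = Finset.range (r + 1) := by
  have hco : ∀ k, ((X - Polynomial.C lam) ^ r).coeff k = (-lam) ^ (r - k) * (r.choose k : F) := by
    intro k
    rw [show (X - Polynomial.C lam) = X + Polynomial.C (-lam) by rw [map_neg]; ring]
    exact coeff_X_add_C_pow (-lam) r k
  ext k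
  rw [mem_support_iff, hco, Finset.mem_range]
  constructor
  · intro h
    by_contra hk
    rw [Nat.choose_eq_zero_of_lt (by omega), Nat.cast_zero, mul_zero] at h
    exact h rfl
  · intro hk
    apply mul_ne_zero (pow_ne_zero _ (neg_ne_zero.mpr hlam))
    rw [Ne, CharP.cast_eq_zero_iff F p]
    intro hdvd
    have h1 : r.choose k ∣ r.factorial :=
      ⟨(Nat.factorial k) * (Nat.factorial (r - k)), by
        rw [← mul_assoc]; exact (Nat.choose_mul_factorial_mul_factorial (by omega)).symm⟩
    have h2 : p ∣ r.factorial := hdvd.trans h1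
    have := (Nat.Prime.dvd_factorial hp).mp h2
    omega

lemma card_support_pow {p : ℕ} (hp : p.Prime) [CharP F p] :
    ∀ t : ℕ, ∀ {lam : F}, lam ≠ 0 →
      ((X - Polynomial.C lam) ^ t).support.card = Vdig p t := by
  intro t
  induction t using Nat.strong_induction_on with
  | _ t IH =>
    intro lam hlam
    rcases eq_or_ne t 0 with rfl | ht
    · rw [pow_zero, Vdig_zero, ← Polynomial.C_1, Polynomial.support_C one_ne_zero,
        Finset.card_singleton]
    · have hp2 := hp.two_le
      have hppos := hp.pos
      haveI : Fact p.Prime := ⟨hp⟩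
      have key : (X - Polynomial.C lam) ^ t
          = (X - Polynomial.C lam) ^ (t % p) *
            Polynomial.expand F p ((X - Polynomial.C (lam ^ p)) ^ (t / p)) := by
        rw [map_pow, map_sub, Polynomial.expand_X, Polynomial.expand_C]
        have hfr : ((X : F[X]) ^ p - Polynomial.C (lam ^ p)) = (X - Polynomial.C lam) ^ p := by
          rw [sub_pow_char, map_pow]
        rw [hfr, ← pow_mul, ← pow_add]
        exact congrArg _ (Nat.mod_add_div t p).symm
      have hdeg : ((X - Polynomial.C lam) ^ (t % p)).natDegree < p := by
        rw [natDegree_pow, natDegree_X_sub_C, mul_one]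
        exact Nat.mod_lt _ hppos
      rw [key, card_support_mul_expand hppos hdeg, support_pow_small hp hlam (Nat.mod_lt _ hppos),
        Finset.card_range, IH (t / p) (Nat.div_lt_self (by omega) hp2) (pow_ne_zero _ hlam)]
      rw [Vdig_rec hp2 ht]


lemma sparse {p : ℕ} (hp : p.Prime) [CharP F p] {lam : F} (hlam : lam ≠ 0) :
    ∀ (w : ℕ) (h : F[X]), h ≠ 0 → (∀ k ∈ h.support, k < p) →
      (X - Polynomial.C lam) ^ w ∣ h → w < h.support.card := by
  intro w
  induction w with
  | zero =>
    intro h hh _ _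
    exact Finset.card_pos.mpr (Polynomial.support_nonempty.mpr hh)
  | succ w IH =>
    intro h hh hsupp hdvd
    classical
    have hXm : X ^ h.natTrailingDegree ∣ h := by
      rw [Polynomial.X_pow_dvd_iff]
      intro d hd
      exact Polynomial.coeff_eq_zero_of_lt_natTrailingDegree hd
    obtain ⟨h1, hfact⟩ := hXm
    obtain ⟨m, hm⟩ : ∃ m, h.natTrailingDegree = m := ⟨_, rfl⟩
    rw [hm] at hfact
    have hh1 : h1 ≠ 0 := fun h0 => hh (by rw [hfact, h0, mul_zero])
    have hc0 : h1.coeff 0 ≠ 0 := by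
      have h2 := Polynomial.trailingCoeff_nonzero_iff_nonzero.mpr hh
      rw [Polynomial.trailingCoeff, hm, hfact, Polynomial.coeff_X_pow_mul'] at h2
      simpa using h2
    have hsupprel : h.support = h1.support.image (· + m) := by
      conv_lhs => rw [hfact]
      ext M
      simp only [mem_support_iff, Finset.mem_image]
      constructor
      · intro hM
        have hmM : m ≤ M := by
          by_contra hlt
          push_neg at hlt
          rw [Polynomial.coeff_X_pow_mul'] at hM
          simp [Nat.not_le.mpr hlt] at hM
        refine ⟨M - m, ?_, by omega⟩
        rwa [show M = (M - m) + m by omega,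
          Polynomial.coeff_X_pow_mul] at hM
      · rintro ⟨k, hk, rfl⟩
        rwa [Polynomial.coeff_X_pow_mul]
    have hcards : h.support.card = h1.support.card := by
      rw [hsupprel]
      exact Finset.card_image_of_injective _ (add_left_injective m)
    have hsupp1 : ∀ k ∈ h1.support, k < p := by
      intro k hk
      have hmem : k + m ∈ h.support := by
        rw [hsupprel]; exact Finset.mem_image_of_mem _ hk
      have := hsupp _ hmem
      omega
    have hXroot : ¬ (X - Polynomial.C lam) ∣ X ^ m := by
      rw [Polynomial.dvd_iff_isRoot, Polynomial.IsRoot, eval_pow, eval_X]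
      exact pow_ne_zero _ hlam
    have hdvd1 : (X - Polynomial.C lam) ^ (w + 1) ∣ h1 := by
      refine (Polynomial.prime_X_sub_C lam).pow_dvd_of_dvd_mul_left _ hXroot ?_
      rwa [← hfact]
    rw [hcards]
    by_cases hd : h1.natDegree = 0
    · exfalso
      obtain ⟨a, rfl⟩ := Polynomial.natDegree_eq_zero.mp hd
      have : (X - Polynomial.C lam) ∣ Polynomial.C a :=
        dvd_trans (dvd_pow_self _ (Nat.succ_ne_zero w)) hdvd1
      rw [Polynomial.dvd_iff_isRoot, Polynomial.IsRoot, eval_C] at this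
      simp [this] at hc0
    · -- derivative step
      set h2 := Polynomial.derivative h1 with hh2
      have hdvd2 : (X - Polynomial.C lam) ^ w ∣ h2 := by
        obtain ⟨g, hg⟩ := hdvd1
        rw [hh2, hg, Polynomial.derivative_mul, Polynomial.derivative_pow_succ]
        apply dvd_add
        · exact ((dvd_mul_left _ _).mul_right _).mul_right _
        · exact (pow_dvd_pow _ (Nat.le_succ w)).mul_right _
      have hsupp2 : h2.support = (h1.support.erase 0).image (· - 1) := by
        ext k
        simp only [mem_support_iff, Finset.mem_image, Finset.mem_erase]
        constructor
        · intro hk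
          rw [hh2, Polynomial.coeff_derivative] at hk
          have : h1.coeff (k + 1) ≠ 0 := fun h0 => hk (by rw [h0, zero_mul])
          exact ⟨k + 1, ⟨Nat.succ_ne_zero k, this⟩, by omega⟩
        · rintro ⟨j, ⟨hj0, hj⟩, rfl⟩
          rw [hh2, Polynomial.coeff_derivative]
          have hjp : j < p := hsupp1 j (mem_support_iff.mpr hj)
          have hcast : ((j - 1 : ℕ) + 1 : F) ≠ 0 := by
            have hcc : (((j - 1) + 1 : ℕ) : F) ≠ 0 := by
              rw [show (j - 1) + 1 = j by omega, Ne, CharP.cast_eq_zero_iff F p]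
              intro hdd
              have := Nat.le_of_dvd (by omega) hdd
              omega
            simpa using hcc
          rw [show (j - 1) + 1 = j by omega]
          exact mul_ne_zero hj hcast
      have hcard2 : h2.support.card = h1.support.card - 1 := by
        rw [hsupp2, Finset.card_image_of_injOn, Finset.card_erase_of_mem]
        · exact mem_support_iff.mpr hc0
        · rintro a ha b hb hab
          have ha' : a ≠ 0 := by simp [Finset.coe_erase] at ha; tauto
          have hb' : b ≠ 0 := by simp [Finset.coe_erase] at hb; tauto
          simp only at hab
          omega
      have hne2 : h2 ≠ 0 := by
        rw [← Polynomial.support_nonempty, hsupp2]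
        refine ⟨h1.natDegree - 1, ?_⟩
        apply Finset.mem_image_of_mem
        rw [Finset.mem_erase]
        exact ⟨hd, Polynomial.natDegree_mem_support_of_nonzero hh1⟩
      have hsuppp2 : ∀ k ∈ h2.support, k < p := by
        intro k hk
        rw [hsupp2, Finset.mem_image] at hk
        obtain ⟨j, hj, rfl⟩ := hk
        have := hsupp1 j (Finset.mem_erase.mp hj).2
        omega
      have := IH h2 hne2 hsuppp2 hdvd2
      have hpos : 0 < h1.support.card := Finset.card_pos.mpr (Polynomial.support_nonempty.mpr hh1)
      omega


lemma exists_sect_ne_zero {η : ℕ} (hη : 0 < η) {c : F[X]} (hc : c ≠ 0) :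
    ∃ j < η, sect η j c ≠ 0 := by
  by_contra hall
  push_neg at hall
  apply hc
  rw [← decomp hη c]
  apply Finset.sum_eq_zero
  intro j hj
  rw [hall j (Finset.mem_range.mp hj), map_zero, mul_zero]

lemma natDegree_sect_lt {η N : ℕ} (hη : 0 < η) (hN : 0 < N) {c : F[X]}
    (hdeg : c.natDegree < η * N) (j : ℕ) : (sect η j c).natDegree < N := by
  rcases eq_or_ne (sect η j c) 0 with h0 | h0
  · rw [h0, natDegree_zero]; exact hN
  · by_contra hge
    push_neg at hge
    have hco : (sect η j c).coeff (sect η j c).natDegree ≠ 0 := by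
      rw [← Polynomial.leadingCoeff]
      exact Polynomial.leadingCoeff_ne_zero.mpr h0
    rw [coeff_sect hη] at hco
    have h1 : η * (sect η j c).natDegree + j ≤ c.natDegree := le_natDegree_of_ne_zero hco
    have h2 : η * N ≤ η * (sect η j c).natDegree := Nat.mul_le_mul_left η hge
    omega

lemma LB1 {p : ℕ} (hp : p.Prime) [CharP F p] :
    ∀ (s : ℕ) {lam : F}, lam ≠ 0 → ∀ (i : ℕ) (c : F[X]), c ≠ 0 →
      (X - Polynomial.C lam) ^ i ∣ c → c.natDegree < p ^ s →
      ∃ t, i ≤ t ∧ t < p ^ s ∧ Vdig p t ≤ c.support.card := by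
  have hppos := hp.pos
  have hp2 := hp.two_le
  haveI : Fact p.Prime := ⟨hp⟩
  intro s
  induction s with
  | zero =>
    intro lam hlam i c hc hdvd hdeg
    have hi0 : i = 0 := by
      by_contra hi
      have h1 : (X - Polynomial.C lam) ∣ c := dvd_trans (dvd_pow_self _ hi) hdvd
      have h2 := Polynomial.natDegree_le_of_dvd h1 hc
      rw [natDegree_X_sub_C] at h2
      rw [pow_zero] at hdeg
      omega
    refine ⟨0, by omega, by rw [pow_zero]; omega, ?_⟩
    rw [Vdig_zero]
    exact Finset.card_pos.mpr (Polynomial.support_nonempty.mpr hc)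
  | succ s IH =>
    intro lam hlam i c hc hdvd hdeg
    have hlamp : lam ^ p ≠ 0 := pow_ne_zero _ hlam
    set β := i / p with hβ
    set ρ := i % p with hρ
    have hi : i = p * β + ρ := by rw [hβ, hρ]; exact (Nat.div_add_mod i p).symm
    have hρp : ρ < p := Nat.mod_lt _ hppos
    -- Frobenius form of the divisor
    have hfrob : (X - Polynomial.C lam) ^ (p * β)
        = Polynomial.expand F p ((X - Polynomial.C (lam ^ p)) ^ β) := by
      rw [map_pow, map_sub, Polynomial.expand_X, Polynomial.expand_C]
      rw [show ((X : F[X]) ^ p - Polynomial.C (lam ^ p)) = (X - Polynomial.C lam) ^ p by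
        rw [sub_pow_char, map_pow], ← pow_mul]
    obtain ⟨c', hc'⟩ : (X - Polynomial.C lam) ^ (p * β) ∣ c :=
      dvd_trans (pow_dvd_pow _ (by rw [hi]; exact Nat.le_add_right _ _)) hdvd
    have hcrw : c = Polynomial.expand F p ((X - Polynomial.C (lam ^ p)) ^ β) * c' := by
      rw [← hfrob]; exact hc'
    have hsect : ∀ j < p, sect p j c = (X - Polynomial.C (lam ^ p)) ^ β * sect p j c' := by
      intro j hj
      rw [hcrw, sect_mul hppos hj]
    have hdegsect : ∀ j, (sect p j c).natDegree < p ^ s := by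
      intro j
      apply natDegree_sect_lt hppos (pow_pos hppos s)
      rwa [← pow_succ']
    classical
    set S := (Finset.range p).filter
      (fun j => ¬ (X - Polynomial.C (lam ^ p)) ^ (β + 1) ∣ sect p j c) with hS
    by_cases hSe : S = ∅
    · -- all sections divisible by (X - C (lam^p))^(β+1)
      obtain ⟨j0, hj0, hj0ne⟩ := exists_sect_ne_zero hppos hc
      have hdvd1 : (X - Polynomial.C (lam ^ p)) ^ (β + 1) ∣ sect p j0 c := by
        by_contra hnd
        have : j0 ∈ S := by rw [hS, Finset.mem_filter]; exact ⟨Finset.mem_range.mpr hj0, hnd⟩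
        rw [hSe] at this
        exact absurd this (Finset.notMem_empty j0)
      obtain ⟨t', ht1, ht2, ht3⟩ := IH hlamp (β + 1) (sect p j0 c) hj0ne hdvd1 (hdegsect j0)
      refine ⟨p * t', ?_, ?_, ?_⟩
      · have := Nat.mul_le_mul_left p ht1
        rw [Nat.mul_succ] at this
        omega
      · rw [pow_succ']
        have h2 : p * (t' + 1) ≤ p * p ^ s := Nat.mul_le_mul_left p ht2
        rw [Nat.mul_succ] at h2
        omega
      · rw [Vdig_mul hp2]
        exact le_trans ht3 (card_sect_le hppos c hj0)
    · -- S nonempty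
      have hSne : S.Nonempty := Finset.nonempty_iff_ne_empty.mpr hSe
      have hSsub : S ⊆ Finset.range p := Finset.filter_subset _ _
      -- claim : ρ < S.card
      have hclaim : ρ < S.card := by
        rcases Nat.eq_zero_or_pos ρ with h0 | hρpos
        · rw [h0]
          exact Finset.card_pos.mpr hSne
        · -- the sparse-polynomial argument
          have hrhodvd : (X - Polynomial.C lam) ^ ρ ∣ c' := by
            have h1 : (X - Polynomial.C lam) ^ (p * β) * (X - Polynomial.C lam) ^ ρ ∣
                (X - Polynomial.C lam) ^ (p * β) * c' := by
              rw [← pow_add, ← hi, ← hc']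
              exact hdvd
            exact (mul_dvd_mul_iff_left (pow_ne_zero _ (Polynomial.X_sub_C_ne_zero lam))).mp h1
          set hpol : F[X] := ∑ j ∈ Finset.range p,
            Polynomial.C ((sect p j c').eval (lam ^ p)) * X ^ j with hhpol
          have hSchar : ∀ j < p, (j ∈ S ↔ (sect p j c').eval (lam ^ p) ≠ 0) := by
            intro j hj
            rw [hS, Finset.mem_filter]
            have e1 : sect p j c = (X - Polynomial.C (lam ^ p)) ^ β * sect p j c' := hsect j hj
            rw [e1]
            constructor
            · rintro ⟨-, hnd⟩
              intro heval
              apply hnd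
              rw [pow_succ]
              apply mul_dvd_mul_left
              rw [Polynomial.dvd_iff_isRoot]
              exact heval
            · intro heval
              refine ⟨Finset.mem_range.mpr hj, ?_⟩
              intro hdd
              rw [pow_succ] at hdd
              have := (mul_dvd_mul_iff_left
                (pow_ne_zero β (Polynomial.X_sub_C_ne_zero (lam ^ p)))).mp hdd
              rw [Polynomial.dvd_iff_isRoot] at this
              exact heval this
          have hdvddiff : (X - Polynomial.C lam) ^ p ∣ (c' - hpol) := by
            have hc'dec : c' = ∑ j ∈ Finset.range p,
                X ^ j * Polynomial.expand F p (sect p j c') := (decomp hppos c').symm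
            conv_rhs => rw [hc'dec]
            rw [hhpol, ← Finset.sum_sub_distrib]
            apply Finset.dvd_sum
            intro j hj
            have hterm : X ^ j * Polynomial.expand F p (sect p j c')
                - Polynomial.C ((sect p j c').eval (lam ^ p)) * X ^ j
                = X ^ j * (Polynomial.expand F p (sect p j c')
                  - Polynomial.C ((sect p j c').eval (lam ^ p))) := by ring
            rw [hterm]
            apply Dvd.dvd.mul_left
            -- (X - C lam)^p = X^p - C (lam^p) divides expand p b - C (b.eval (lam^p))
            have hXp : ((X : F[X]) - Polynomial.C lam) ^ p
                = (X : F[X]) ^ p - Polynomial.C (lam ^ p) := by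
              rw [sub_pow_char, map_pow]
            rw [hXp]
            set b := sect p j c' with hb
            have hroot : (X - Polynomial.C (lam ^ p)) ∣ (b - Polynomial.C (b.eval (lam ^ p))) := by
              rw [Polynomial.dvd_iff_isRoot]
              simp [Polynomial.IsRoot]
            obtain ⟨u, hu⟩ := hroot
            refine ⟨Polynomial.expand F p u, ?_⟩
            have := congrArg (Polynomial.expand F p) hu
            rw [map_sub, map_mul, map_sub, Polynomial.expand_X, Polynomial.expand_C,
              Polynomial.expand_C] at this
            exact this
          have hdvdh : (X - Polynomial.C lam) ^ ρ ∣ hpol := by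
            have h1 : (X - Polynomial.C lam) ^ ρ ∣ (c' - hpol) :=
              dvd_trans (pow_dvd_pow _ (le_of_lt hρp)) hdvddiff
            have h2 : hpol = c' - (c' - hpol) := by ring
            rw [h2]
            exact dvd_sub hrhodvd h1
          have hcoeffh : ∀ k, hpol.coeff k =
              if k < p then (sect p k c').eval (lam ^ p) else 0 := by
            intro k
            rw [hhpol, coeff_sum_C_X]
          have hsupph : ∀ k ∈ hpol.support, k < p := by
            intro k hk
            rw [mem_support_iff, hcoeffh] at hk
            by_contra hge
            simp [hge] at hk
          have hsuppS : hpol.support ⊆ S := by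
            intro k hk
            rw [mem_support_iff, hcoeffh] at hk
            have hkp : k < p := by
              by_contra hge
              simp [hge] at hk
            rw [if_pos hkp] at hk
            exact (hSchar k hkp).mpr hk
          have hhne : hpol ≠ 0 := by
            obtain ⟨j1, hj1S⟩ := hSne
            have hj1p : j1 < p := Finset.mem_range.mp (hSsub hj1S)
            intro h0
            have := (hSchar j1 hj1p).mp hj1S
            apply this
            have := congrArg (fun q => Polynomial.coeff q j1) h0
            simp only [Polynomial.coeff_zero] at this
            rw [hcoeffh, if_pos hj1p] at this
            exact this
          have := sparse hp hlam ρ hpol hhne hsupph hdvdh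
          exact lt_of_lt_of_le this (Finset.card_le_card hsuppS)
      -- apply IH to every member of S
      have hIH : ∀ j : ℕ, ∃ t, j ∈ S → (β ≤ t ∧ t < p ^ s ∧ Vdig p t ≤ (sect p j c).support.card) := by
        intro j
        by_cases hjS : j ∈ S
        · have hjp : j < p := Finset.mem_range.mp (hSsub hjS)
          have hjne : sect p j c ≠ 0 := by
            intro h0
            rw [hS, Finset.mem_filter] at hjS
            exact hjS.2 (by rw [h0]; exact dvd_zero _)
          have hjdvd : (X - Polynomial.C (lam ^ p)) ^ β ∣ sect p j c := by
            rw [hsect j hjp]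
            exact Dvd.intro _ rfl
          obtain ⟨t, ht⟩ := IH hlamp β (sect p j c) hjne hjdvd (hdegsect j)
          exact ⟨t, fun _ => ht⟩
        · exact ⟨0, fun h => absurd h hjS⟩
      choose T hT using hIH
      obtain ⟨jm, hjm, hjmin⟩ := S.exists_min_image (fun j => Vdig p (T j)) hSne
      obtain ⟨hTm1, hTm2, hTm3⟩ := hT jm hjm
      refine ⟨p * T jm + ρ, ?_, ?_, ?_⟩
      · have := Nat.mul_le_mul_left p hTm1
        omega
      · have h1 : T jm + 1 ≤ p ^ s := hTm2
        have h2 : p * (T jm + 1) ≤ p * p ^ s := Nat.mul_le_mul_left p h1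
        rw [Nat.mul_succ] at h2
        rw [pow_succ']
        omega
      · rw [Vdig_mul_add hp2 _ _ hρp]
        calc (ρ + 1) * Vdig p (T jm) ≤ S.card * Vdig p (T jm) :=
              Nat.mul_le_mul_right _ (by omega)
          _ = ∑ _j ∈ S, Vdig p (T jm) := by rw [Finset.sum_const, smul_eq_mul]
          _ ≤ ∑ j ∈ S, Vdig p (T j) := Finset.sum_le_sum (fun j hj => hjmin j hj)
          _ ≤ ∑ j ∈ S, (sect p j c).support.card :=
              Finset.sum_le_sum (fun j hj => (hT j hj).2.2)
          _ ≤ c.support.card := sum_card_sect_le hppos c S hSsub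

lemma LBeta {p : ℕ} (hp : p.Prime) [CharP F p] {η : ℕ} (hη : 0 < η) {lam : F} (hlam : lam ≠ 0)
    (s i : ℕ) (c : F[X]) (hc : c ≠ 0) (hdvd : ((X : F[X]) ^ η - Polynomial.C lam) ^ i ∣ c)
    (hdeg : c.natDegree < η * p ^ s) :
    ∃ t, i ≤ t ∧ t < p ^ s ∧ Vdig p t ≤ c.support.card := by
  have hexp : ((X : F[X]) ^ η - Polynomial.C lam) ^ i
      = Polynomial.expand F η ((X - Polynomial.C lam) ^ i) := by
    rw [map_pow, map_sub, Polynomial.expand_X, Polynomial.expand_C]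
  obtain ⟨d, hd⟩ := hdvd
  rw [hexp] at hd
  obtain ⟨j0, hj0, hj0ne⟩ := exists_sect_ne_zero hη hc
  have hsect0 : sect η j0 c = (X - Polynomial.C lam) ^ i * sect η j0 d := by
    rw [hd, sect_mul hη hj0]
  have hdvd0 : (X - Polynomial.C lam) ^ i ∣ sect η j0 c := by
    rw [hsect0]; exact Dvd.intro _ rfl
  obtain ⟨t, ht1, ht2, ht3⟩ := LB1 hp s hlam i (sect η j0 c) hj0ne hdvd0
    (natDegree_sect_lt hη (pow_pos hp.pos s) hdeg j0)
  exact ⟨t, ht1, ht2, le_trans ht3 (card_sect_le hη c hj0)⟩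


lemma sum_C_coeff {n : ℕ} (f : F[X]) (hf : f.natDegree < n) :
    ∑ j : Fin n, Polynomial.C (f.coeff (j : ℕ)) * X ^ (j : ℕ) = f := by
  rw [Fin.sum_univ_eq_sum_range (fun k => Polynomial.C (f.coeff k) * X ^ k) n]
  ext k
  rw [coeff_sum_C_X]
  split_ifs with h
  · rfl
  · exact (coeff_eq_zero_of_natDegree_lt (by omega)).symm

lemma coeff_P {n : ℕ} (c : Fin n → F) (k : ℕ) :
    (∑ j : Fin n, Polynomial.C (c j) * X ^ (j : ℕ)).coeff k
      = if h : k < n then c ⟨k, h⟩ else 0 := by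
  have h1 : ∑ j : Fin n, Polynomial.C (c j) * X ^ (j : ℕ)
      = ∑ m ∈ Finset.range n, Polynomial.C (if h : m < n then c ⟨m, h⟩ else 0) * X ^ m := by
    rw [← Fin.sum_univ_eq_sum_range
      (fun m => Polynomial.C (if h : m < n then c ⟨m, h⟩ else 0) * X ^ m) n]
    apply Finset.sum_congr rfl
    intro j _
    congr 1
    rw [dif_pos j.isLt]
  rw [h1, coeff_sum_C_X]
  split_ifs with h
  · rfl
  · rfl

lemma hammingNorm_eq_card_support {n : ℕ} [DecidableEq F] (c : Fin n → F) :
    hammingNorm c = (∑ j : Fin n, Polynomial.C (c j) * X ^ (j : ℕ)).support.card := by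
  classical
  have hs : (∑ j : Fin n, Polynomial.C (c j) * X ^ (j : ℕ)).support
      = (Finset.univ.filter (fun i : Fin n => c i ≠ 0)).image Fin.val := by
    ext k
    simp only [mem_support_iff, Finset.mem_image, Finset.mem_filter, Finset.mem_univ, true_and]
    rw [coeff_P]
    constructor
    · intro hk
      rcases Nat.lt_or_ge k n with h | h
      · rw [dif_pos h] at hk
        exact ⟨⟨k, h⟩, hk, rfl⟩
      · rw [dif_neg (by omega)] at hk
        exact absurd rfl hk
    · rintro ⟨i, hi, rfl⟩
      rw [dif_pos i.isLt]
      simpa using hi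
  rw [hs, Finset.card_image_of_injective _ Fin.val_injective]
  rfl

end MCJ

open MCJ in
theorem stmt1_aux {p m : ℕ} (hp : p.Prime) (hm : 1 ≤ m)
    {F : Type} [Field F] [Fintype F] [DecidableEq F] (hcard : Fintype.card F = p ^ m)
    (η : ℕ) (hη : 0 < η) (hcop : Nat.Coprime η p) (s : ℕ) (hs : 1 ≤ s)
    (lam0 : F) (hlam0 : lam0 ≠ 0) (i : ℕ) (hi : i ≤ p ^ s - 1) :
    IsLeast {w : ℕ | ∃ c ∈ {c : Fin (η * p ^ s) → F |
        (∑ j : Fin (η * p ^ s), Polynomial.C (c j) * X ^ (j : ℕ)) ∈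
          Ideal.span {((X : F[X]) ^ η - Polynomial.C lam0) ^ i,
            X ^ (η * p ^ s) - Polynomial.C (lam0 ^ p ^ s)}},
      c ≠ 0 ∧ hammingNorm c = w}
      (Finset.inf' (Finset.Icc i (p ^ s - 1)) (Finset.nonempty_Icc.mpr hi) (Vdig p)) := by
  haveI hpfact : Fact p.Prime := ⟨hp⟩
  -- characteristic
  haveI hcharF : CharP F p := by
    haveI := ringChar.charP F
    obtain ⟨k, hk, hkcard⟩ := FiniteField.card F (ringChar F)
    have h1 : p ∣ ringChar F ^ (k : ℕ) := by
      rw [← hkcard, hcard]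
      exact dvd_pow_self p (by omega)
    have h2 : p ∣ ringChar F := hp.dvd_of_dvd_pow h1
    have h3 : ringChar F = p := ((Nat.prime_dvd_prime_iff_eq hp hk).mp h2).symm
    exact h3 ▸ ringChar.charP F
  have hpspos : 0 < p ^ s := pow_pos hp.pos s
  set n : ℕ := η * p ^ s with hn
  set lam : F := lam0 ^ p ^ s with hlam
  set g : F[X] := ((X : F[X]) ^ η - Polynomial.C lam0) ^ i with hg
  have hfrob : ((X : F[X]) ^ η - Polynomial.C lam0) ^ (p ^ s)
      = X ^ n - Polynomial.C lam := by
    rw [sub_pow_char_pow, ← pow_mul, hlam, map_pow, hn]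
  have hgdvd : g ∣ X ^ n - Polynomial.C lam := by
    rw [← hfrob, hg]
    exact pow_dvd_pow _ (by omega)
  have hmem_iff : ∀ f : F[X],
      f ∈ Ideal.span {g, X ^ n - Polynomial.C lam} ↔ g ∣ f := by
    intro f
    rw [Ideal.mem_span_pair]
    constructor
    · rintro ⟨u, v, rfl⟩
      exact dvd_add (Dvd.dvd.mul_left dvd_rfl u) (Dvd.dvd.mul_left hgdvd v)
    · rintro ⟨w, rfl⟩
      exact ⟨w, 0, by ring⟩
  constructor
  · -- membership : a codeword of minimal weight
    obtain ⟨t0, ht0mem, ht0eq⟩ := Finset.exists_mem_eq_inf'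
      (Finset.nonempty_Icc.mpr hi) (Vdig p)
    obtain ⟨hti, ht1⟩ := Finset.mem_Icc.mp ht0mem
    have htlt : t0 < p ^ s := by omega
    set g0 : F[X] := ((X : F[X]) ^ η - Polynomial.C lam0) ^ t0 with hg0
    have hdeg0 : g0.natDegree = t0 * η := by
      rw [hg0, natDegree_pow, natDegree_X_pow_sub_C]
    have hdeg0' : g0.natDegree < n := by
      rw [hdeg0, hn]
      have h2 : η * (t0 + 1) ≤ η * p ^ s := Nat.mul_le_mul_left η htlt
      rw [Nat.mul_succ] at h2
      have h3 : t0 * η = η * t0 := Nat.mul_comm t0 η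
      omega
    set cvec : Fin n → F := fun j => g0.coeff (j : ℕ) with hcvec
    have hP : ∑ j : Fin n, Polynomial.C (cvec j) * X ^ (j : ℕ) = g0 :=
      sum_C_coeff g0 hdeg0'
    refine ⟨cvec, ?_, ?_, ?_⟩
    · show _ ∈ Ideal.span _
      rw [hP, hmem_iff]
      exact pow_dvd_pow _ hti
    · -- nonzero
      have hmonic : g0.Monic := (monic_X_pow_sub_C lam0 (by omega : η ≠ 0)).pow t0
      intro h0
      have h1 : cvec ⟨g0.natDegree, hdeg0'⟩ = 0 := by rw [h0]; rfl
      rw [hcvec] at h1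
      simp only at h1
      rw [hmonic.coeff_natDegree] at h1
      exact one_ne_zero h1
    · rw [hammingNorm_eq_card_support, hP, ht0eq]
      have hg0exp : g0 = Polynomial.C (1 : F) *
          Polynomial.expand F η ((X - Polynomial.C lam0) ^ t0) := by
        rw [Polynomial.C_1, one_mul, map_pow, map_sub, Polynomial.expand_X,
          Polynomial.expand_C, hg0]
      rw [hg0exp, card_support_mul_expand hη (by rw [natDegree_C]; exact hη),
        Polynomial.support_C (one_ne_zero : (1 : F) ≠ 0), Finset.card_singleton, one_mul,
        card_support_pow hp t0 hlam0]
  · -- lower bound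
    rintro w ⟨c, hcmem, hcne, rfl⟩
    have hPne : (∑ j : Fin n, Polynomial.C (c j) * X ^ (j : ℕ)) ≠ 0 := by
      intro h0
      apply hcne
      funext j
      have h1 := congrArg (fun q => Polynomial.coeff q (j : ℕ)) h0
      simp only [Polynomial.coeff_zero] at h1
      rw [coeff_P, dif_pos j.isLt] at h1
      exact h1
    have hPdeg : (∑ j : Fin n, Polynomial.C (c j) * X ^ (j : ℕ)).natDegree < n := by
      by_contra hge
      push_neg at hge
      have h1 : (∑ j : Fin n, Polynomial.C (c j) * X ^ (j : ℕ)).coeff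
          (∑ j : Fin n, Polynomial.C (c j) * X ^ (j : ℕ)).natDegree ≠ 0 := by
        rw [← Polynomial.leadingCoeff]
        exact Polynomial.leadingCoeff_ne_zero.mpr hPne
      rw [coeff_P, dif_neg (by omega)] at h1
      exact h1 rfl
    have hdvdP : g ∣ (∑ j : Fin n, Polynomial.C (c j) * X ^ (j : ℕ)) :=
      (hmem_iff _).mp hcmem
    obtain ⟨t, ht1, ht2, ht3⟩ := LBeta hp hη hlam0 s i _ hPne (hg ▸ hdvdP) hPdeg
    calc Finset.inf' _ (Finset.nonempty_Icc.mpr hi) (Vdig p) ≤ Vdig p t :=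
          Finset.inf'_le _ (Finset.mem_Icc.mpr ⟨ht1, by omega⟩)
      _ ≤ _ := by rw [hammingNorm_eq_card_support]; exact ht3


/-- The minimum distance of `C_i(η, p^s, λ₀)` equals
`min { V_t : i ≤ t ≤ p^s − 1 }`. -/
theorem stmt1 {p m : ℕ} (hp : p.Prime) (hm : 1 ≤ m)
    {F : Type} [Field F] [Fintype F] [DecidableEq F] (hcard : Fintype.card F = p ^ m)
    (η : ℕ) (hη : 0 < η) (hcop : Nat.Coprime η p) (s : ℕ) (hs : 1 ≤ s)
    (lam0 : F) (hlam0 : lam0 ≠ 0) (i : ℕ) (hi : i ≤ p ^ s - 1) :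
    minDistIs (Ci p η s i lam0)
      (Finset.inf' (Finset.Icc i (p ^ s - 1)) (Finset.nonempty_Icc.mpr hi) (Vdig p)) :=
  stmt1_aux hp hm hcard η hη hcop s hs lam0 hlam0 i hi
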